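/- Let A be an r×r symmetrizable generalized Cartan matrix and let ρ : ℚ(y_1,...,y_r)_{>0} → ℤ^max be a semifield homomorphism. Let {y(i,m)}_{(i,m)∈[1,r]×ℤ} be defined by y(i,0) = y_i and the recursion y(i,m)·y(i,m+1) = Π_{j=i+1}^r (1+y(j,m))^{-a_{j,i}} · Π_{j=1}^{i-1}(1+y(j,m+1))^{-a_{j,i}}. Then the map k : [1,r]×ℤ → ℤ defined by k(i,m) = ρ(y(i,m)) is a cluster-additive function associated to A. -/
import Mathlib


open Finset

/-- An `r × r` symmetrizable generalized Cartan matrix. -/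
def IsSGCM {r : ℕ} (A : Matrix (Fin r) (Fin r) ℤ) : Prop :=
  (∀ i, A i i = 2) ∧ (∀ i j, i ≠ j → A i j ≤ 0) ∧
    ∃ D : Fin r → ℤ, (∀ i, 0 < D i) ∧ ∀ i j, D i * A i j = D j * A j i

/-- A cluster-additive function associated to `A`. -/
def ClusterAdditive {r : ℕ} (A : Matrix (Fin r) (Fin r) ℤ) (k : Fin r → ℤ → ℤ) : Prop :=
  ∀ (i : Fin r) (m : ℤ),
    k i m + k i (m + 1) =
      (∑ j ∈ Finset.univ.filter (fun j => i < j), (-(A j i)) * max (k j m) 0) +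
        ∑ j ∈ Finset.univ.filter (fun j => j < i), (-(A j i)) * max (k j (m + 1)) 0

/-- A tropical frieze associated to `A`. -/
def TropicalFrieze {r : ℕ} (A : Matrix (Fin r) (Fin r) ℤ) (f : Fin r → ℤ → ℤ) : Prop :=
  ∀ (i : Fin r) (m : ℤ),
    f i m + f i (m + 1) =
      max ((∑ j ∈ Finset.univ.filter (fun j => i < j), (-(A j i)) * f j m) +
        ∑ j ∈ Finset.univ.filter (fun j => j < i), (-(A j i)) * f j (m + 1)) 0


open Finset

section Aux

variable {S : Type*} [Semifield S] (ρ : S → ℤ)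

lemma rho_one (hmul : ∀ a b : S, a ≠ 0 → b ≠ 0 → ρ (a * b) = ρ a + ρ b) : ρ 1 = 0 := by
  have := hmul 1 1 one_ne_zero one_ne_zero
  simp at this
  linarith

lemma rho_pow (hmul : ∀ a b : S, a ≠ 0 → b ≠ 0 → ρ (a * b) = ρ a + ρ b)
    (x : S) (hx : x ≠ 0) : ∀ n : ℕ, ρ (x ^ n) = n * ρ x := by
  intro n
  induction n with
  | zero => simpa using rho_one ρ hmul
  | succ n ih =>
    rw [pow_succ, hmul _ _ (pow_ne_zero _ hx) hx, ih]
    push_cast; ring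

lemma rho_prod (hmul : ∀ a b : S, a ≠ 0 → b ≠ 0 → ρ (a * b) = ρ a + ρ b)
    {ι : Type*} (s : Finset ι) (g : ι → S) (hg : ∀ j ∈ s, g j ≠ 0) :
    ρ (∏ j ∈ s, g j) = ∑ j ∈ s, ρ (g j) := by
  induction s using Finset.cons_induction with
  | empty => simpa using rho_one ρ hmul
  | cons a s ha ih =>
    rw [Finset.prod_cons, Finset.sum_cons,
      hmul _ _ (hg a (Finset.mem_cons_self a s))
        (Finset.prod_ne_zero_iff.mpr fun j hj => hg j (Finset.mem_cons_of_mem hj)),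
      ih (fun j hj => hg j (Finset.mem_cons_of_mem hj))]

lemma rho_factor (hmul : ∀ a b : S, a ≠ 0 → b ≠ 0 → ρ (a * b) = ρ a + ρ b)
    (hadd : ∀ a b : S, a ≠ 0 → b ≠ 0 → ρ (a + b) = max (ρ a) (ρ b))
    (n : ℤ) (x : S) (hx : x ≠ 0) (hn : 0 ≤ n) (hne : (1 + x) ^ n ≠ 0) :
    ρ ((1 + x) ^ n) = n * max (ρ x) 0 := by
  obtain ⟨k, rfl⟩ := Int.eq_ofNat_of_zero_le hn
  rw [zpow_natCast] at hne ⊢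
  rcases Nat.eq_zero_or_pos k with hk | hk
  · subst hk; simpa using rho_one ρ hmul
  · have h1x : (1 : S) + x ≠ 0 := by
      intro h
      exact hne (by rw [h, zero_pow hk.ne'])
    rw [rho_pow ρ hmul _ h1x, hadd 1 x one_ne_zero hx, rho_one ρ hmul, max_comm]

end Aux

theorem cluster_additive_of_semifield_hom {r : ℕ} (A : Matrix (Fin r) (Fin r) ℤ)
    (hA : IsSGCM A) {S : Type*} [Semifield S]
    (Y : Fin r → ℤ → S) (hY0 : ∀ i m, Y i m ≠ 0)
    (hY : ∀ (i : Fin r) (m : ℤ), Y i m * Y i (m + 1) =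
      (∏ j ∈ Finset.univ.filter (fun j => i < j), (1 + Y j m) ^ (-(A j i))) *
        ∏ j ∈ Finset.univ.filter (fun j => j < i), (1 + Y j (m + 1)) ^ (-(A j i)))
    (ρ : S → ℤ)
    (hmul : ∀ a b : S, a ≠ 0 → b ≠ 0 → ρ (a * b) = ρ a + ρ b)
    (hadd : ∀ a b : S, a ≠ 0 → b ≠ 0 → ρ (a + b) = max (ρ a) (ρ b)) :
    ClusterAdditive A (fun i m => ρ (Y i m)) := by
  intro i m
  simp only
  have hrec := hY i m
  have hL : ρ (Y i m * Y i (m + 1)) = ρ (Y i m) + ρ (Y i (m + 1)) :=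
    hmul _ _ (hY0 i m) (hY0 i (m + 1))
  have hRne : ((∏ j ∈ Finset.univ.filter (fun j => i < j), (1 + Y j m) ^ (-(A j i))) *
      ∏ j ∈ Finset.univ.filter (fun j => j < i), (1 + Y j (m + 1)) ^ (-(A j i))) ≠ 0 := by
    rw [← hrec]; exact mul_ne_zero (hY0 i m) (hY0 i (m + 1))
  have hP1ne : (∏ j ∈ Finset.univ.filter (fun j => i < j), (1 + Y j m) ^ (-(A j i))) ≠ 0 :=
    fun h => hRne (by rw [h, zero_mul])
  have hP2ne : (∏ j ∈ Finset.univ.filter (fun j => j < i), (1 + Y j (m + 1)) ^ (-(A j i))) ≠ 0 :=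
    fun h => hRne (by rw [h, mul_zero])
  have hf1 : ∀ j ∈ Finset.univ.filter (fun j => i < j), (1 + Y j m) ^ (-(A j i)) ≠ 0 :=
    Finset.prod_ne_zero_iff.mp hP1ne
  have hf2 : ∀ j ∈ Finset.univ.filter (fun j => j < i),
      (1 + Y j (m + 1)) ^ (-(A j i)) ≠ 0 :=
    Finset.prod_ne_zero_iff.mp hP2ne
  calc ρ (Y i m) + ρ (Y i (m + 1))
      = ρ (Y i m * Y i (m + 1)) := hL.symm
    _ = _ := by
        rw [hrec, hmul _ _ hP1ne hP2ne, rho_prod ρ hmul _ _ hf1, rho_prod ρ hmul _ _ hf2]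
        congr 1
        · refine Finset.sum_congr rfl fun j hj => ?_
          have hji : j ≠ i := (Finset.mem_filter.mp hj).2.ne'
          exact rho_factor ρ hmul hadd _ _ (hY0 j m)
            (by linarith [hA.2.1 j i hji]) (hf1 j hj)
        · refine Finset.sum_congr rfl fun j hj => ?_
          have hji : j ≠ i := (Finset.mem_filter.mp hj).2.ne
          exact rho_factor ρ hmul hadd _ _ (hY0 j (m + 1))
            (by linarith [hA.2.1 j i hji]) (hf2 j hj)
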